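/- For every real y ≥ 4 and every τ = x + iy in the upper half-plane, |j(τ)|·e^{-2πy} ≤ 1 + (1 + 1/(πy))·e^{-πy}, where j is the modular j-invariant. -/

import Mathlib

set_option maxHeartbeats 1000000


open Complex Real

/-- If `j` has `q`-expansion `j(τ) = 1/q + ∑ c(n) qⁿ` with integer coefficients satisfying
`c(0) = 744` and `0 ≤ c(n) < e^{4π√n}` for `n ≥ 1`, then for every `τ = x + iy` with `y ≥ 4`,
`|j(τ)|·e^{-2πy} ≤ 1 + (1 + 1/(πy))·e^{-πy}`. -/
theorem j_abs_bound (j : ℂ → ℂ) (c : ℕ → ℤ)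
    (hq : ∀ τ : ℂ, 0 < τ.im →
      j τ = 1 / Complex.exp (2 * π * I * τ) +
        ∑' n : ℕ, (c n : ℂ) * Complex.exp (2 * π * I * τ) ^ n)
    (hc0 : c 0 = 744)
    (hcnonneg : ∀ n, 0 ≤ c n)
    (hcub : ∀ n : ℕ, 1 ≤ n → (c n : ℝ) < Real.exp (4 * π * Real.sqrt n))
    (τ : ℂ) (hy : 4 ≤ τ.im) :
    ‖j τ‖ * Real.exp (-2 * π * τ.im) ≤
      1 + (1 + 1 / (π * τ.im)) * Real.exp (-π * τ.im) := by
  have hπ : (0:ℝ) < π := Real.pi_pos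
  set y := τ.im with hyd
  have hy0 : (0:ℝ) < y := by linarith
  set r : ℝ := Real.exp (-(π * y)) with hrd
  have hr0 : 0 < r := Real.exp_pos _
  have hr1 : r < 1 := by
    rw [hrd, Real.exp_lt_one_iff]
    nlinarith
  set q : ℂ := Complex.exp (2 * π * I * τ) with hqd
  have habsq : ‖q‖ = r ^ 2 := by
    rw [hqd, Complex.norm_exp, ← Real.exp_nat_mul]
    congr 1
    have : (2 * (π:ℂ) * I * τ).re = -(2 * π * y) := by
      simp [Complex.mul_re, Complex.mul_im]
      try ring
    rw [this]
    push_cast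
    ring
  have h745 : 745 * r ≤ 1 := by
    have h1 : r ≤ Real.exp (-12) := by
      apply Real.exp_le_exp.2
      nlinarith [Real.pi_gt_three]
    have h2 : Real.exp (-12) * Real.exp 12 = 1 := by
      rw [← Real.exp_add]; norm_num
    have h3 : (745:ℝ) ≤ Real.exp 12 := by
      have : ((2:ℝ)) ^ (12:ℕ) ≤ (Real.exp 1) ^ (12:ℕ) := by
        apply pow_le_pow_left₀ (by norm_num)
        linarith [Real.add_one_le_exp (1:ℝ)]
      calc (745:ℝ) ≤ 2 ^ (12:ℕ) := by norm_num
        _ ≤ (Real.exp 1) ^ (12:ℕ) := this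
        _ = Real.exp 12 := by rw [← Real.exp_nat_mul]; norm_num
    nlinarith [Real.exp_pos (12:ℝ), Real.exp_pos (-12:ℝ)]
  -- bound the coefficient terms
  have hfb : ∀ n : ℕ, ‖(c n : ℂ) * q ^ n‖ ≤ 744 * r ^ n := by
    intro n
    rw [norm_mul, norm_pow, habsq]
    have hcn : ‖(c n : ℂ)‖ = (c n : ℝ) := by
      rw [Complex.norm_intCast, _root_.abs_of_nonneg (by exact_mod_cast hcnonneg n : (0:ℝ) ≤ (c n : ℝ))]
    rw [hcn]
    rcases Nat.eq_zero_or_pos n with h | h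
    · subst h; simp [hc0]
    · have hb := (hcub n h).le
      have h1 : (1:ℝ) ≤ (n:ℝ) := by exact_mod_cast h
      have hsq : Real.sqrt n ≤ n := by
        calc Real.sqrt n ≤ Real.sqrt ((n:ℝ)^2) := Real.sqrt_le_sqrt (by nlinarith)
          _ = n := Real.sqrt_sq (by positivity)
      calc (c n : ℝ) * (r ^ 2) ^ n ≤ Real.exp (4 * π * Real.sqrt n) * (r ^ 2) ^ n := by
            apply mul_le_mul_of_nonneg_right hb (by positivity)
        _ ≤ r ^ n := by
            rw [← pow_mul, hrd, ← Real.exp_nat_mul, ← Real.exp_nat_mul, ← Real.exp_add]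
            apply Real.exp_le_exp.2
            have : 4 * π * Real.sqrt n ≤ π * y * n := by
              have h2 : 4 * π * Real.sqrt n ≤ 4 * π * (n:ℝ) := by nlinarith
              have h3 : 4 * π * (n:ℝ) ≤ π * y * n := by
                nlinarith [mul_nonneg (mul_nonneg hπ.le (by linarith : (0:ℝ) ≤ y - 4)) (by positivity : (0:ℝ) ≤ (n:ℝ))]
              linarith
            push_cast
            nlinarith
        _ ≤ 744 * r ^ n := by nlinarith [pow_pos hr0 n]
  have hgs : Summable (fun n : ℕ => 744 * r ^ n) :=
    (summable_geometric_of_lt_one hr0.le hr1).mul_left _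
  have hs : Summable (fun n : ℕ => ‖(c n : ℂ) * q ^ n‖) :=
    Summable.of_nonneg_of_le (fun n => norm_nonneg _) hfb hgs
  have htsum : (∑' n : ℕ, ‖(c n : ℂ) * q ^ n‖) ≤ 744 * (1 - r)⁻¹ := by
    calc (∑' n : ℕ, ‖(c n : ℂ) * q ^ n‖) ≤ ∑' n : ℕ, 744 * r ^ n :=
          Summable.tsum_le_tsum hfb hs hgs
      _ = 744 * (1 - r)⁻¹ := by
          rw [tsum_mul_left, tsum_geometric_of_lt_one hr0.le hr1]
  have hjb : ‖j τ‖ ≤ (r ^ 2)⁻¹ + 744 * (1 - r)⁻¹ := by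
    rw [hq τ (by linarith)]
    refine (norm_add_le _ _).trans ?_
    have h1 : ‖1 / q‖ = (r ^ 2)⁻¹ := by
      rw [norm_div, habsq, norm_one, one_div]
    rw [h1]
    have h2 : ‖∑' n : ℕ, (c n : ℂ) * q ^ n‖ ≤ 744 * (1 - r)⁻¹ := by
      refine (norm_tsum_le_tsum_norm ?_).trans ?_
      · simpa using hs
      · simpa using htsum
    gcongr
  have hexp2 : Real.exp (-2 * π * y) = r ^ 2 := by
    rw [hrd, ← Real.exp_nat_mul]
    congr 1
    push_cast; ring
  have hexp1 : Real.exp (-π * y) = r := by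
    rw [hrd]; congr 1; ring
  rw [hexp2, hexp1]
  have hπy : 0 < π * y := by positivity
  have hstep : ‖j τ‖ * r ^ 2 ≤ ((r ^ 2)⁻¹ + 744 * (1 - r)⁻¹) * r ^ 2 := by
    apply mul_le_mul_of_nonneg_right hjb (by positivity)
  refine hstep.trans ?_
  have h1r : (0:ℝ) < 1 - r := by linarith
  have hinv : (0:ℝ) ≤ 1 / (π * y) := by positivity
  have key : ((r ^ 2)⁻¹ + 744 * (1 - r)⁻¹) * r ^ 2 = 1 + 744 * r ^ 2 / (1 - r) := by
    field_simp
  rw [key]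
  have : 744 * r ^ 2 / (1 - r) ≤ r := by
    rw [div_le_iff₀ h1r]
    nlinarith
  nlinarith
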